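/- Let φ : ℂ → ℂ be holomorphic with φ(0) = 0, and let f₀,…,f_k be holomorphic functions near 0. Then W(f₀∘φ, …, f_k∘φ)(0) = φ'(0)^{k(k+1)/2} · W(f₀,…,f_k)(φ(0)) = φ'(0)^{k(k+1)/2} · W(f₀,…,f_k)(0), where W is the Wronskian determinant of derivatives up to order k evaluated at 0. -/

import Mathlib

lemma diff_deriv {f : ℂ → ℂ} (hf : Differentiable ℂ f) : Differentiable ℂ (deriv f) := by
  have h := (hf.contDiff (n := (⊤ : WithTop ℕ∞))).differentiable_iteratedDeriv 1 (by simp)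
  simpa [iteratedDeriv_one] using h

lemma diff_iter {f : ℂ → ℂ} (hf : Differentiable ℂ f) (q : ℕ) :
    Differentiable ℂ (iteratedDeriv q f) :=
  (hf.contDiff (n := (⊤ : WithTop ℕ∞))).differentiable_iteratedDeriv q
    (by exact_mod_cast WithTop.coe_lt_top _)

lemma faa (φ : ℂ → ℂ) (hφ : Differentiable ℂ φ) (p : ℕ) :
    ∃ c : ℕ → ℂ → ℂ, (∀ q, Differentiable ℂ (c q)) ∧
      (c p = fun z => (deriv φ z) ^ p) ∧ (∀ q, p < q → c q = 0) ∧
      (∀ f : ℂ → ℂ, Differentiable ℂ f → ∀ z,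
        iteratedDeriv p (f ∘ φ) z
          = ∑ q ∈ Finset.range (p + 1), c q z * iteratedDeriv q f (φ z)) := by
  induction p with
  | zero =>
    refine ⟨fun q => if q = 0 then (fun _ => 1) else 0, ?_, by simp, ?_, ?_⟩
    · intro q
      dsimp only
      by_cases h : q = 0
      · rw [if_pos h]; exact differentiable_const 1
      · rw [if_neg h]; exact differentiable_const 0
    · intro q hq; dsimp only; rw [if_neg (by omega : ¬ q = 0)]
    · intro f hf z; simp [iteratedDeriv_zero, Function.comp]
  | succ p ih =>
    obtain ⟨c, hc, hdiag, hvan, hsum⟩ := ih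
    set cm : ℕ → ℂ → ℂ := fun q => match q with | 0 => 0 | Nat.succ q' => c q' with hcm
    have hcm0 : cm 0 = 0 := rfl
    have hcms : ∀ q, cm (q + 1) = c q := fun _ => rfl
    have hcmd : ∀ q, Differentiable ℂ (cm q) := by
      intro q; cases q with
      | zero => rw [hcm0]; exact differentiable_const 0
      | succ q' => rw [hcms]; exact hc q'
    have hd0 : ∀ z : ℂ, deriv (0 : ℂ → ℂ) z = 0 := by
      intro z; simp [Pi.zero_def]
    refine ⟨fun q z => deriv (c q) z + deriv φ z * cm q z, ?_, ?_, ?_, ?_⟩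
    · intro q
      exact (diff_deriv (hc q)).add ((diff_deriv hφ).mul (hcmd q))
    · funext z
      show deriv (c (p + 1)) z + deriv φ z * cm (p + 1) z = _
      have h1 : c (p + 1) = 0 := hvan _ (Nat.lt_succ_self p)
      rw [h1, hd0, hcms, hdiag]
      simp [pow_succ, mul_comm]
    · intro q hq
      funext z
      match q, hq with
      | Nat.succ q', hq =>
        have h1 : c (q' + 1) = 0 := hvan _ (by omega)
        have h2 : c q' = 0 := hvan _ (by omega)
        show deriv (c (q' + 1)) z + deriv φ z * cm (q' + 1) z = (0 : ℂ → ℂ) z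
        rw [h1, hd0, hcms, h2]
        simp
    · intro f hf z
      have hiter : ∀ q, Differentiable ℂ fun w => iteratedDeriv q f (φ w) :=
        fun q => (diff_iter hf q).comp hφ
      have hterm : ∀ q, Differentiable ℂ fun w => c q w * iteratedDeriv q f (φ w) :=
        fun q => (hc q).mul (hiter q)
      have heq : iteratedDeriv p (f ∘ φ)
          = fun w => ∑ q ∈ Finset.range (p + 1), c q w * iteratedDeriv q f (φ w) :=
        funext fun w => hsum f hf w
      rw [iteratedDeriv_succ, heq, deriv_fun_sum (fun q _ => hterm q z)]
      have hder : ∀ q, deriv (fun w => c q w * iteratedDeriv q f (φ w)) z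
          = deriv (c q) z * iteratedDeriv q f (φ z)
            + c q z * (iteratedDeriv (q + 1) f (φ z) * deriv φ z) := by
        intro q
        rw [deriv_fun_mul ((hc q) z) ((hiter q) z)]
        congr 1
        have : deriv (fun w => iteratedDeriv q f (φ w)) z
            = deriv (iteratedDeriv q f) (φ z) * deriv φ z :=
          deriv_comp z ((diff_iter hf q) (φ z)) (hφ z)
        rw [this, ← iteratedDeriv_succ]
      calc ∑ q ∈ Finset.range (p + 1), deriv (fun w => c q w * iteratedDeriv q f (φ w)) z
          = ∑ q ∈ Finset.range (p + 1),
              (deriv (c q) z * iteratedDeriv q f (φ z)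
                + c q z * (iteratedDeriv (q + 1) f (φ z) * deriv φ z)) :=
            Finset.sum_congr rfl fun q _ => hder q
        _ = ∑ q ∈ Finset.range (p + 2),
              (deriv (c q) z + deriv φ z * cm q z) * iteratedDeriv q f (φ z) := by
            have hA : ∑ q ∈ Finset.range (p + 2), deriv (c q) z * iteratedDeriv q f (φ z)
                = ∑ q ∈ Finset.range (p + 1), deriv (c q) z * iteratedDeriv q f (φ z) := by
              rw [Finset.sum_range_succ]
              rw [hvan _ (Nat.lt_succ_self p), hd0]
              ring
            have hB : ∑ q ∈ Finset.range (p + 2),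
                deriv φ z * cm q z * iteratedDeriv q f (φ z)
                = ∑ q ∈ Finset.range (p + 1),
                    c q z * (iteratedDeriv (q + 1) f (φ z) * deriv φ z) := by
              rw [Finset.sum_range_succ']
              rw [hcm0]
              simp only [Pi.zero_apply, mul_zero, zero_mul, add_zero]
              refine Finset.sum_congr rfl fun q _ => ?_
              rw [hcms]; ring
            have hsplit : ∀ q ∈ Finset.range (p + 2),
                (deriv (c q) z + deriv φ z * cm q z) * iteratedDeriv q f (φ z)
                = deriv (c q) z * iteratedDeriv q f (φ z)
                  + deriv φ z * cm q z * iteratedDeriv q f (φ z) :=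
              fun q _ => by ring
            rw [Finset.sum_congr rfl hsplit, Finset.sum_add_distrib,
              Finset.sum_add_distrib, hA, hB]

/-- For a holomorphic reparametrization `φ` with `φ 0 = 0`, the Wronskian of
`f₀∘φ, …, f_k∘φ` at `0` equals `φ'(0)^{k(k+1)/2}` times the Wronskian of the `f_i` at
`φ 0 = 0`. -/
theorem wronskian_comp_reparam (k : ℕ) (φ : ℂ → ℂ) (hφ : Differentiable ℂ φ)
    (hφ0 : φ 0 = 0) (f : Fin (k + 1) → ℂ → ℂ) (hf : ∀ i, Differentiable ℂ (f i)) :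
    Matrix.det (fun p i : Fin (k + 1) => iteratedDeriv (p : ℕ) (f i ∘ φ) 0)
      = (deriv φ 0) ^ (k * (k + 1) / 2) *
        Matrix.det (fun p i : Fin (k + 1) => iteratedDeriv (p : ℕ) (f i) (φ 0)) := by
  classical
  choose c hcdiff hdiag hvan hsum using fun p : Fin (k + 1) => faa φ hφ (p : ℕ)
  set B : Matrix (Fin (k + 1)) (Fin (k + 1)) ℂ := fun p q => c p (q : ℕ) 0 with hB
  set M : Matrix (Fin (k + 1)) (Fin (k + 1)) ℂ :=
    fun q i => iteratedDeriv (q : ℕ) (f i) (φ 0) with hM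
  have hmul : (fun p i : Fin (k + 1) => iteratedDeriv (p : ℕ) (f i ∘ φ) 0) = B * M := by
    funext p i
    have h1 : iteratedDeriv (p : ℕ) (f i ∘ φ) 0
        = ∑ q ∈ Finset.range ((p : ℕ) + 1), c p q 0 * iteratedDeriv q (f i) (φ 0) :=
      hsum p (f i) (hf i) 0
    have h2 : ∑ q ∈ Finset.range ((p : ℕ) + 1), c p q 0 * iteratedDeriv q (f i) (φ 0)
        = ∑ q ∈ Finset.range (k + 1), c p q 0 * iteratedDeriv q (f i) (φ 0) := by
      refine Finset.sum_subset ?_ ?_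
      · intro x hx
        have := p.isLt
        simp only [Finset.mem_range] at hx ⊢; omega
      · intro x _ hx
        simp only [Finset.mem_range, not_lt] at hx
        have := p.isLt
        rw [hvan p x (by omega)]
        simp
    rw [h1, h2, ← Fin.sum_univ_eq_sum_range (fun q => c p q 0 * iteratedDeriv q (f i) (φ 0))]
    rfl
  have htri : B.BlockTriangular OrderDual.toDual := by
    intro p q h
    have hlt : (p : ℕ) < (q : ℕ) := h
    show c p (q : ℕ) 0 = 0
    rw [hvan p _ hlt]; rfl
  have hdetB : B.det = (deriv φ 0) ^ (k * (k + 1) / 2) := by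
    rw [Matrix.det_of_lowerTriangular B htri]
    have hd : ∀ p : Fin (k + 1), B p p = (deriv φ 0) ^ (p : ℕ) := by
      intro p
      show c p (p : ℕ) 0 = _
      rw [hdiag p]
    rw [Finset.prod_congr rfl fun p _ => hd p, Finset.prod_pow_eq_pow_sum]
    congr 1
    rw [Fin.sum_univ_eq_sum_range (fun q => q) (k + 1), Finset.sum_range_id,
      Nat.add_sub_cancel, Nat.mul_comm]
  rw [hmul, Matrix.det_mul, hdetB]
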